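/- Let p > 3 be a prime number and set ℓ0 = 2p and m0 = 2p. Then the only pair (ℓ, m) in T satisfying the resonance equation m0²(ℓ+2)(ℓ−1)ℓ = (ℓ0+2)(ℓ0−1)ℓ0·m² is (ℓ, m) = (2p, 2p). -/
import Mathlib


/-- Let `p > 3` be a prime number and set `ℓ0 = 2p` and `m0 = 2p`. Then the only
pair `(ℓ, m)` in the set `T` (consisting of the pairs with `1 ≤ ℓ ≤ c0 = (ℓ0+2)(ℓ0−1)ℓ0/m0²`,
`0 ≤ m ≤ ℓ`, `ℓ − m` even) satisfying the resonance equation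
`m0²(ℓ+2)(ℓ−1)ℓ = (ℓ0+2)(ℓ0−1)ℓ0·m²` is `(ℓ, m) = (2p, 2p)`.
(The condition `ℓ ≤ c0` is expressed equivalently as `ℓ·m0² ≤ (ℓ0+2)(ℓ0−1)ℓ0`.) -/
theorem stmt2 (p : ℕ) (hp : Nat.Prime p) (h3 : 3 < p)
    (ℓ0 m0 : ℕ) (hℓ0 : ℓ0 = 2 * p) (hm0 : m0 = 2 * p) :
    {q : ℕ × ℕ | 1 ≤ q.1 ∧ q.1 * m0 ^ 2 ≤ (ℓ0 + 2) * (ℓ0 - 1) * ℓ0 ∧ q.2 ≤ q.1 ∧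
        Even (q.1 - q.2) ∧
        m0 ^ 2 * ((q.1 + 2) * (q.1 - 1) * q.1) = (ℓ0 + 2) * (ℓ0 - 1) * ℓ0 * q.2 ^ 2}
      = {(2 * p, 2 * p)} := by
  subst hℓ0 hm0
  obtain ⟨q, rfl⟩ : ∃ q, p = q + 4 := ⟨p - 4, by omega⟩
  obtain ⟨s, hs⟩ := hp.odd_of_ne_two (by omega)
  have e1 : 2 * (q + 4) - 1 = 2 * q + 7 := by omega
  ext ⟨ℓ, m⟩
  simp only [Set.mem_setOf_eq, Set.mem_singleton_iff, Prod.mk.injEq]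
  rw [e1]
  constructor
  · rintro ⟨h1, h2, h3', h4, h5⟩
    obtain ⟨r, hr⟩ := h4
    -- reduce the equation by cancelling 4*(q+4)
    have h6 : (q + 4) * ((ℓ + 2) * (ℓ - 1) * ℓ) = (q + 5) * (2 * q + 7) * m ^ 2 := by
      apply Nat.eq_of_mul_eq_mul_left (show 0 < 4 * (q + 4) by omega)
      calc 4 * (q + 4) * ((q + 4) * ((ℓ + 2) * (ℓ - 1) * ℓ))
          = (2 * (q + 4)) ^ 2 * ((ℓ + 2) * (ℓ - 1) * ℓ) := by ring
        _ = (2 * (q + 4) + 2) * (2 * q + 7) * (2 * (q + 4)) * m ^ 2 := h5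
        _ = 4 * (q + 4) * ((q + 5) * (2 * q + 7) * m ^ 2) := by ring
    -- ℓ ≤ 2p
    have hl : ℓ ≤ 2 * q + 8 := by nlinarith [h2]
    -- p ∣ m
    have hd1 : ¬ (q + 4) ∣ (q + 5) := by
      intro h
      have h' := Nat.dvd_sub h (dvd_refl (q + 4))
      have e : q + 5 - (q + 4) = 1 := by omega
      rw [e] at h'
      have := Nat.le_of_dvd one_pos h'
      omega
    have hd2 : ¬ (q + 4) ∣ (2 * q + 7) := by
      intro h
      have h' := Nat.dvd_sub (Dvd.intro 2 rfl : (q + 4) ∣ (q + 4) * 2) h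
      have e : (q + 4) * 2 - (2 * q + 7) = 1 := by omega
      rw [e] at h'
      have := Nat.le_of_dvd one_pos h'
      omega
    have hdm : (q + 4) ∣ m := by
      have h7 : (q + 4) ∣ (q + 5) * (2 * q + 7) * m ^ 2 := ⟨_, h6.symm⟩
      have h8 : (q + 4) ∣ (q + 5) * (2 * q + 7) ∨ (q + 4) ∣ m ^ 2 :=
        (Nat.Prime.dvd_mul hp).mp h7
      rcases h8 with h8 | h8
      · rcases (Nat.Prime.dvd_mul hp).mp h8 with h | h
        · exact absurd h hd1
        · exact absurd h hd2
      · exact hp.dvd_of_dvd_pow h8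
    obtain ⟨k, rfl⟩ := hdm
    have hk : k ≤ 2 := by nlinarith [h3', hl]
    interval_cases k
    · -- m = 0 : forces ℓ = 1, parity fails
      simp only [Nat.mul_zero, Nat.zero_pow, Nat.pow_zero] at h6
      have h6' : (q + 4) * ((ℓ + 2) * (ℓ - 1) * ℓ) = 0 := by
        simpa using h6
      rcases Nat.mul_eq_zero.mp h6' with h | h
      · omega
      · rcases Nat.mul_eq_zero.mp h with h' | h'
        · rcases Nat.mul_eq_zero.mp h' with h'' | h'' <;> omega
        · omega
    · -- m = p
      exfalso
      have h7 : (ℓ + 2) * (ℓ - 1) * ℓ = (q + 5) * (2 * q + 7) * (q + 4) := by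
        apply Nat.eq_of_mul_eq_mul_left (show 0 < q + 4 by omega)
        calc (q + 4) * ((ℓ + 2) * (ℓ - 1) * ℓ)
            = (q + 5) * (2 * q + 7) * ((q + 4) * 1) ^ 2 := h6
          _ = (q + 4) * ((q + 5) * (2 * q + 7) * (q + 4)) := by ring
      have hdl : (q + 4) ∣ (ℓ + 2) * (ℓ - 1) * ℓ := by
        rw [h7]; exact ⟨(q + 5) * (2 * q + 7), by ring⟩
      have hm3 : (q + 4) * 1 ≤ ℓ := h3'
      rcases (Nat.Prime.dvd_mul hp).mp hdl with h | h
      · rcases (Nat.Prime.dvd_mul hp).mp h with h' | h'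
        · -- p ∣ ℓ + 2
          obtain ⟨t, ht⟩ := h'
          have ht1 : 1 ≤ t := by rcases t with _ | t <;> omega
          have ht2 : t ≤ 2 := by
            by_contra hc
            push_neg at hc
            have := Nat.mul_le_mul_left (q + 4) (show 3 ≤ t by omega)
            omega
          interval_cases t <;> omega
        · -- p ∣ ℓ - 1
          obtain ⟨t, ht⟩ := h'
          have ht1 : 1 ≤ t := by rcases t with _ | t <;> omega
          have ht2 : t ≤ 1 := by
            by_contra hc
            push_neg at hc
            have := Nat.mul_le_mul_left (q + 4) (show 2 ≤ t by omega)
            omega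
          interval_cases t
          omega
      · -- p ∣ ℓ
        obtain ⟨t, ht⟩ := h
        have ht1 : 1 ≤ t := by rcases t with _ | t <;> omega
        have ht2 : t ≤ 2 := by
          by_contra hc
          push_neg at hc
          have := Nat.mul_le_mul_left (q + 4) (show 3 ≤ t by omega)
          omega
        interval_cases t
        · -- ℓ = p : the equation fails
          have hℓ : ℓ = q + 4 := by omega
          subst hℓ
          have e2 : q + 4 - 1 = q + 3 := by omega
          rw [e2] at h7
          have h8 : (q + 4 + 2) * (q + 3) = (q + 5) * (2 * q + 7) :=
            Nat.eq_of_mul_eq_mul_right (show 0 < q + 4 by omega) h7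
          nlinarith [h8]
        · omega
    · -- m = 2p : forces ℓ = 2p
      constructor <;> omega
  · rintro ⟨rfl, rfl⟩
    refine ⟨by omega, by nlinarith, le_refl _, by simp, ?_⟩
    have e2 : 2 * (q + 4) - 1 = 2 * q + 7 := by omega
    rw [e2]
    ring
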